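/- If in every feasible schedule the total infusion time on the chair with the s-th earliest first start is at most C_s := |H| − ⌈s/|R|⌉·m, then the maximum number of non-critical patients on chairs in one day is bounded above by the optimum of the assignment problem: maximize Σ_{p,s} μ_{ps} subject to Σ_s μ_{ps} ≤ 1 for each p and Σ_p f_p μ_{ps} ≤ C_s for each chair s. -/

import Mathlib

open Finset

/-- If chair `s` (1-indexed, in order of earliest first start) can host at most
`C s = H - ⌈s/R⌉·m` total infusion time, then a feasible single-day schedule induces a
feasible solution of the capacitated assignment problem with value equal to the number of
chair-scheduled patients, hence that number is bounded by the assignment optimum. -/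
theorem stmt_7 {Q : Type*} [Fintype Q] (n H R m : ℕ)
    (f : Q → ℕ) (hf : ∀ p, 0 < f p)
    (C : Fin n → ℕ) (hC : ∀ s : Fin n, C s = H - ((s.1 + 1 + R - 1) / R) * m)
    (chair : Q → Fin n)
    (hcap : ∀ s : Fin n, ∑ p ∈ univ.filter (fun p : Q => chair p = s), f p ≤ C s) :
    ∃ μ : Q → Fin n → ℕ,
      (∀ p s, μ p s ≤ 1) ∧
      (∀ p, ∑ s : Fin n, μ p s ≤ 1) ∧
      (∀ s : Fin n, ∑ p : Q, f p * μ p s ≤ C s) ∧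
      (∑ p : Q, ∑ s : Fin n, μ p s = Fintype.card Q) ∧
      ∀ opt : ℕ,
        (∀ μ' : Q → Fin n → ℕ, (∀ p s, μ' p s ≤ 1) → (∀ p, ∑ s : Fin n, μ' p s ≤ 1) →
          (∀ s : Fin n, ∑ p : Q, f p * μ' p s ≤ C s) →
          ∑ p : Q, ∑ s : Fin n, μ' p s ≤ opt) →
        Fintype.card Q ≤ opt := by
  refine ⟨fun p s => if chair p = s then 1 else 0, ?_, ?_, ?_, ?_, ?_⟩
  · intro p s; dsimp only; split <;> simp
  · intro p; simp
  · intro s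
    have := hcap s
    rw [Finset.sum_filter] at this
    simpa [mul_ite] using this
  · have : ∀ p : Q, ∑ s : Fin n, (if chair p = s then 1 else 0) = 1 := by
      intro p; simp
    simp [this]
  · intro opt hopt
    have h := hopt (fun p s => if chair p = s then 1 else 0)
      (by intro p s; split <;> simp) (by intro p; simp)
      (by intro s
          have := hcap s
          rw [Finset.sum_filter] at this
          simpa [mul_ite] using this)
    simpa using h
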